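/- The equality functor Eq : ∫(Id × Id) ⇒ Set sending (X, x, y) to the set x =_X y is continuous relative to the forgetful functor ∫(Id × Id) → Set. -/

import Mathlib

open CategoryTheory Limits

universe u w w₁ w₂

/-- A functor `K` on `A` is continuous relative to `U : A ⥤ B`. -/
def RelativelyContinuous {A : Type w₁} [Category.{u} A] {B : Type w₂} [Category.{u} B]
    (U : A ⥤ B) (K : A ⥤ Type w) : Prop :=
  ∀ (J : Type u) [SmallCategory J] (D : J ⥤ A) (c : Cone D),
    Nonempty (IsLimit (U.mapCone c)) → Nonempty (IsLimit (K.mapCone c))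

/-- The functor `Id × Id : Set ⥤ Set`, `X ↦ X × X`. -/
def diagFunctor : Type u ⥤ Type u where
  obj X := X × X
  map f := TypeCat.ofHom fun p => (f p.1, f p.2)

/-- The equality functor `Eq : ∫(Id × Id) ⥤ Set`, `(X, x, y) ↦ (x = y)`. -/
def eqFunctor : diagFunctor.{u}.Elements ⥤ Type where
  obj e := PLift (e.2.1 = e.2.2)
  map {e e'} φ := TypeCat.ofHom fun q =>
    ⟨((congrArg Prod.fst φ.2).symm.trans (congrArg φ.1 q.down)).trans
      (congrArg Prod.snd φ.2)⟩
  map_id := by intros; ext q; exact Subsingleton.elim _ _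
  map_comp := by intros; ext q; exact Subsingleton.elim _ _

/-- the equality functor is continuous relative to the forgetful functor
`∫(Id × Id) ⥤ Set`. -/
theorem eqFunctor_relativelyContinuous :
    RelativelyContinuous (CategoryOfElements.π diagFunctor.{u}) eqFunctor.{u} := by
  intro J _ D c hc
  obtain ⟨hc⟩ := hc
  rw [Types.isLimit_iff]
  intro s hs
  have key : c.pt.snd.1 = c.pt.snd.2 := by
    have := (Types.isLimitEquivSections hc).injective (a₁ := c.pt.snd.1) (a₂ := c.pt.snd.2)
    apply this
    apply Subtype.ext
    funext j
    have h2 := (c.π.app j).2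
    have h1 : (c.π.app j).1 c.pt.snd.1 = (D.obj j).snd.1 := congrArg Prod.fst h2
    have h2' : (c.π.app j).1 c.pt.snd.2 = (D.obj j).snd.2 := congrArg Prod.snd h2
    show (c.π.app j).1 c.pt.snd.1 = (c.π.app j).1 c.pt.snd.2
    rw [h1, h2', (s j).down]
  exact ⟨⟨key⟩, fun j => Subsingleton.elim (α := PLift _) _ _,
    fun x _ => Subsingleton.elim (α := PLift _) _ _⟩
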